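/- Let C1 ⊆ V1 and C2 ⊆ V2 be proper cones and P : V1 → V2 a linear map. The following are equivalent: (1) P is (C1,C2)-entanglement breaking; (2) for every (C2,C1)-positive linear map Q : V2 → V1 one has Tr[Q ∘ P] ≥ 0. -/

import Mathlib

open scoped TensorProduct
open Set

noncomputable section

/-- The dual cone of a set `C`, inside the algebraic dual space. -/
def dualConeSet {V : Type*} [AddCommGroup V] [Module ℝ V] (C : Set V) :
    Set (Module.Dual ℝ V) := {φ | ∀ x ∈ C, 0 ≤ φ x}

/-- A proper cone: a closed convex cone which is generating (`C - C = V`) and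
pointed (`C ∩ (-C) = {0}`). -/
def IsProperCone {V : Type*} [NormedAddCommGroup V] [NormedSpace ℝ V] (C : Set V) : Prop :=
  IsClosed C ∧ Convex ℝ C ∧ (∀ ⦃c : ℝ⦄, 0 < c → ∀ ⦃x⦄, x ∈ C → c • x ∈ C) ∧
    (∀ v : V, ∃ x ∈ C, ∃ y ∈ C, v = x - y) ∧ C ∩ (-C) = {0}

/-- `(C₁,C₂)`-entanglement breaking maps. -/
def IsEntanglementBreaking {V₁ V₂ : Type*} [AddCommGroup V₁] [Module ℝ V₁]
    [AddCommGroup V₂] [Module ℝ V₂] (C₁ : Set V₁) (C₂ : Set V₂) (P : V₁ →ₗ[ℝ] V₂) : Prop :=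
  ∃ (m : ℕ) (φ : Fin m → Module.Dual ℝ V₁) (x : Fin m → V₂),
    (∀ i, φ i ∈ dualConeSet C₁) ∧ (∀ i, x i ∈ C₂) ∧ ∀ v, P v = ∑ i, φ i v • x i

/-- The `k`-fold minimal tensor power of a cone. -/
def minTensorPow {V : Type*} [AddCommGroup V] [Module ℝ V] (C : Set V) (k : ℕ) :
    Set (⨂[ℝ] _ : Fin k, V) :=
  convexHull ℝ {z | ∃ x : Fin k → V, (∀ i, x i ∈ C) ∧ z = PiTensorProduct.tprod ℝ x}

/-- The functional on the `k`-fold tensor power induced by a family of functionals,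
`x₁ ⊗ ⋯ ⊗ x_k ↦ ∏ i, φ i (x i)`. -/
def dualPairing {V : Type*} [AddCommGroup V] [Module ℝ V] {k : ℕ}
    (φ : Fin k → Module.Dual ℝ V) : (⨂[ℝ] _ : Fin k, V) →ₗ[ℝ] ℝ :=
  PiTensorProduct.lift ((MultilinearMap.mkPiAlgebra ℝ (Fin k) ℝ).compLinearMap φ)

/-- The `k`-fold maximal tensor power of a cone: the dual of the minimal tensor power of
the dual cone, under the canonical identification of `(V^{⊗k})*` with `(V*)^{⊗k}`. -/
def maxTensorPow {V : Type*} [AddCommGroup V] [Module ℝ V] (C : Set V) (k : ℕ) :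
    Set (⨂[ℝ] _ : Fin k, V) :=
  {z | ∀ φ : Fin k → Module.Dual ℝ V, (∀ i, φ i ∈ dualConeSet C) → 0 ≤ dualPairing φ z}

/-- `(C₁,C₂)`-entanglement annihilating maps: `P^{⊗k}` maps the `k`-fold maximal tensor power
of `C₁` into the `k`-fold minimal tensor power of `C₂`, for every `k ≥ 1`. -/
def IsEntanglementAnnihilating {V₁ V₂ : Type*} [AddCommGroup V₁] [Module ℝ V₁]
    [AddCommGroup V₂] [Module ℝ V₂] (C₁ : Set V₁) (C₂ : Set V₂) (P : V₁ →ₗ[ℝ] V₂) : Prop :=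
  ∀ k : ℕ, 1 ≤ k →
    Set.MapsTo (⇑(PiTensorProduct.map fun _ : Fin k => P))
      (maxTensorPow C₁ k) (minTensorPow C₂ k)

/-- A pair of cones is resilient if every entanglement annihilating map between them is
entanglement breaking. -/
def IsResilientPair {V₁ V₂ : Type*} [AddCommGroup V₁] [Module ℝ V₁]
    [AddCommGroup V₂] [Module ℝ V₂] (C₁ : Set V₁) (C₂ : Set V₂) : Prop :=
  ∀ P : V₁ →ₗ[ℝ] V₂, IsEntanglementAnnihilating C₁ C₂ P → IsEntanglementBreaking C₁ C₂ P

/-- The minimal tensor product of two cones. -/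
def minTensor {V W : Type*} [AddCommGroup V] [Module ℝ V] [AddCommGroup W] [Module ℝ W]
    (C : Set V) (D : Set W) : Set (V ⊗[ℝ] W) :=
  convexHull ℝ {z | ∃ x ∈ C, ∃ y ∈ D, z = x ⊗ₜ[ℝ] y}

/-- The maximal tensor product of two cones: the dual of the minimal tensor product of the
dual cones, under the canonical identification of `(V ⊗ W)*` with `V* ⊗ W*`. -/
def maxTensor {V W : Type*} [AddCommGroup V] [Module ℝ V] [AddCommGroup W] [Module ℝ W]
    (C : Set V) (D : Set W) : Set (V ⊗[ℝ] W) :=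
  {z | ∀ φ ∈ dualConeSet C, ∀ ψ ∈ dualConeSet D,
      0 ≤ TensorProduct.dualDistrib ℝ V W (φ ⊗ₜ[ℝ] ψ) z}

/-- The Lorentz cone `L_n ⊆ ℝ ⊕ ℝⁿ`. -/
def lorentzCone (n : ℕ) : Set (ℝ × EuclideanSpace ℝ (Fin n)) := {p | ‖p.2‖ ≤ p.1}



/-- Sum of two elements of a convex cone stays in the cone. -/
lemma add_mem_of_convex_cone {V : Type*} [AddCommGroup V] [Module ℝ V] {C : Set V}
    (hconv : Convex ℝ C) (hsc : ∀ ⦃c : ℝ⦄, 0 < c → ∀ ⦃x⦄, x ∈ C → c • x ∈ C)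
    {x y : V} (hx : x ∈ C) (hy : y ∈ C) : x + y ∈ C := by
  have h2 : ((1:ℝ)/2) • x + ((1:ℝ)/2) • y ∈ C :=
    hconv hx hy (by norm_num) (by norm_num) (by norm_num)
  have := hsc (show (0:ℝ) < 2 by norm_num) h2
  simpa [smul_add, smul_smul] using this

/-- Separation of a point from a closed convex cone. -/
lemma cone_separation {V : Type*} [NormedAddCommGroup V] [NormedSpace ℝ V] {C : Set V}
    (hcl : IsClosed C) (hconv : Convex ℝ C)
    (hsc : ∀ ⦃c : ℝ⦄, 0 < c → ∀ ⦃x⦄, x ∈ C → c • x ∈ C) (h0 : (0:V) ∈ C)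
    {v : V} (hv : v ∉ C) :
    ∃ f : V →L[ℝ] ℝ, (∀ y ∈ C, 0 ≤ f y) ∧ f v < 0 := by
  obtain ⟨f, u, hfv, hfC⟩ := geometric_hahn_banach_point_closed hconv hcl hv
  have hu0 : u < 0 := by simpa using hfC 0 h0
  refine ⟨f, ?_, hfv.trans hu0⟩
  intro y hy
  by_contra hneg
  push_neg at hneg
  have ht : (0:ℝ) < 2 * u / f y := by
    apply div_pos_of_neg_of_neg (by linarith) hneg
  have := hfC _ (hsc ht hy)
  rw [map_smul] at this
  simp only [smul_eq_mul] at this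
  rw [div_mul_cancel₀] at this
  · linarith
  · exact ne_of_lt hneg

lemma zero_mem_of_proper {V : Type*} [NormedAddCommGroup V] [NormedSpace ℝ V] {C : Set V}
    (h : IsProperCone C) : (0:V) ∈ C := by
  have h5 := h.2.2.2.2
  have : (0:V) ∈ C ∩ (-C) := by rw [h5]; rfl
  exact this.1

lemma norm_inv_smul_mem_sphere {V : Type*} [NormedAddCommGroup V] [NormedSpace ℝ V]
    {x : V} (hx : x ≠ 0) : ‖x‖⁻¹ • x ∈ Metric.sphere (0:V) 1 := by
  have h : ‖x‖ ≠ 0 := norm_ne_zero_iff.mpr hx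
  simp [norm_smul, abs_of_nonneg (inv_nonneg.mpr (norm_nonneg x)), inv_mul_cancel₀ h]

lemma smul_norm_inv_smul {V : Type*} [NormedAddCommGroup V] [NormedSpace ℝ V]
    {x : V} (hx : x ≠ 0) : ‖x‖ • (‖x‖⁻¹ • x) = x := by
  have h : ‖x‖ ≠ 0 := norm_ne_zero_iff.mpr hx
  rw [smul_smul, mul_inv_cancel₀ h, one_smul]

/-- A proper cone admits a strictly positive continuous functional. -/
lemma exists_strict_pos_functional {V : Type*} [NormedAddCommGroup V] [NormedSpace ℝ V]
    [FiniteDimensional ℝ V] {C : Set V} (h : IsProperCone C) :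
    ∃ ψ : V →L[ℝ] ℝ, (∀ x ∈ C, 0 ≤ ψ x) ∧ ∀ x ∈ C, x ≠ 0 → 0 < ψ x := by
  obtain ⟨hcl, hconv, hsc, hgen, hptd⟩ := h
  set S : Set V := C ∩ Metric.sphere 0 1 with hS
  have hScpt : IsCompact S := (isCompact_sphere (0:V) 1).inter_left hcl
  -- for each a in S, a separating functional
  have hsep : ∀ a : S, ∃ f : V →L[ℝ] ℝ, (∀ y ∈ C, 0 ≤ f y) ∧ 0 < f a := by
    rintro ⟨a, haC, haS⟩
    have ha0 : a ≠ 0 := by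
      intro h0; rw [h0] at haS; simp at haS
    have hna : -a ∉ C := by
      intro hna
      have : a ∈ C ∩ (-C) := ⟨haC, by simpa using hna⟩
      rw [hptd] at this; exact ha0 this
    obtain ⟨f, hf1, hf2⟩ := cone_separation hcl hconv hsc (zero_mem_of_proper ⟨hcl, hconv, hsc, hgen, hptd⟩) hna
    exact ⟨f, hf1, by simpa using hf2⟩
  choose f hf1 hf2 using hsep
  -- finite subcover
  have hcover : S ⊆ ⋃ a : S, {y : V | 0 < f a y} := by
    intro y hy
    exact mem_iUnion.mpr ⟨⟨y, hy⟩, hf2 ⟨y, hy⟩⟩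
  obtain ⟨t, ht⟩ := hScpt.elim_finite_subcover (fun a : S => {y : V | 0 < f a y})
    (fun a => isOpen_lt continuous_const (f a).continuous) hcover
  refine ⟨∑ a ∈ t, f a, ?_, ?_⟩
  · intro x hx
    simp only [ContinuousLinearMap.coe_sum', Finset.sum_apply]
    exact Finset.sum_nonneg fun a _ => hf1 a x hx
  · intro x hx hx0
    have hxh : ‖x‖⁻¹ • x ∈ S :=
      ⟨hsc (inv_pos.mpr (norm_pos_iff.mpr hx0)) hx, norm_inv_smul_mem_sphere hx0⟩
    obtain ⟨a, hat, ha⟩ := by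
      have := ht hxh
      simpa only [mem_iUnion, exists_prop] using this
    have hpos : 0 < (∑ a ∈ t, f a) (‖x‖⁻¹ • x) := by
      simp only [ContinuousLinearMap.coe_sum', Finset.sum_apply]
      refine lt_of_lt_of_le ha (Finset.single_le_sum (fun b _ => hf1 b _ hxh.1) hat)
    have : (∑ a ∈ t, f a) x = ‖x‖ * (∑ a ∈ t, f a) (‖x‖⁻¹ • x) := by
      conv_lhs => rw [← smul_norm_inv_smul hx0]
      rw [map_smul, smul_eq_mul]
    rw [this]
    exact mul_pos (norm_pos_iff.mpr hx0) hpos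

/-- A proper cone admits an order unit: a vector on which every nonzero positive functional
is strictly positive. -/
lemma exists_order_unit {V : Type*} [NormedAddCommGroup V] [NormedSpace ℝ V]
    [FiniteDimensional ℝ V] {C : Set V} (h : IsProperCone C) :
    ∃ e ∈ C, ∀ φ : V →L[ℝ] ℝ, (∀ x ∈ C, 0 ≤ φ x) → φ ≠ 0 → 0 < φ e := by
  obtain ⟨hcl, hconv, hsc, hgen, hptd⟩ := h
  set D : Set (V →L[ℝ] ℝ) := {φ | ∀ x ∈ C, 0 ≤ φ x} ∩ Metric.sphere 0 1 with hD
  have hDcl : IsClosed {φ : V →L[ℝ] ℝ | ∀ x ∈ C, 0 ≤ φ x} := by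
    have : {φ : V →L[ℝ] ℝ | ∀ x ∈ C, 0 ≤ φ x} = ⋂ x ∈ C, {φ : V →L[ℝ] ℝ | 0 ≤ φ x} := by
      ext φ; simp
    rw [this]
    exact isClosed_biInter fun x _ =>
      isClosed_Ici.preimage (ContinuousLinearMap.apply ℝ ℝ x).continuous
  have hDcpt : IsCompact D := (isCompact_sphere 0 1).inter_left hDcl
  -- for each φ in D, a vector in C on which it is positive
  have hvec : ∀ φ : D, ∃ x ∈ C, 0 < (φ : V →L[ℝ] ℝ) x := by
    rintro ⟨φ, hφpos, hφs⟩
    have hφ0 : φ ≠ 0 := by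
      intro h0; rw [h0] at hφs; simp at hφs
    obtain ⟨v, hv⟩ : ∃ v, φ v ≠ 0 := by
      by_contra hc; push_neg at hc
      exact hφ0 (ContinuousLinearMap.ext fun v => by simpa using hc v)
    obtain ⟨a, haC, b, hbC, rfl⟩ := hgen v
    rcases lt_or_ge 0 (φ a) with hpa | hpa
    · exact ⟨a, haC, hpa⟩
    · have ha0 : φ a = 0 := le_antisymm hpa (hφpos a haC)
      refine ⟨b, hbC, ?_⟩
      rcases (hφpos b hbC).lt_or_eq with hb | hb
      · exact hb
      · exfalso; apply hv; rw [map_sub, ha0, ← hb]; ring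
  choose xv hxvC hxvpos using hvec
  have hcover : D ⊆ ⋃ φ : D, {ψ : V →L[ℝ] ℝ | 0 < ψ (xv φ)} := by
    intro ψ hψ
    exact mem_iUnion.mpr ⟨⟨ψ, hψ⟩, hxvpos ⟨ψ, hψ⟩⟩
  obtain ⟨t, ht⟩ := hDcpt.elim_finite_subcover (fun φ : D => {ψ : V →L[ℝ] ℝ | 0 < ψ (xv φ)})
    (fun φ => isOpen_lt continuous_const (ContinuousLinearMap.apply ℝ ℝ (xv φ)).continuous)
    hcover
  have h0C : (0:V) ∈ C := zero_mem_of_proper ⟨hcl, hconv, hsc, hgen, hptd⟩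
  refine ⟨∑ φ ∈ t, xv φ, ?_, ?_⟩
  · exact Finset.sum_induction _ (· ∈ C) (fun a b ha hb => add_mem_of_convex_cone hconv hsc ha hb)
      h0C (fun φ _ => hxvC φ)
  · intro φ hφpos hφ0
    have hφn : ‖φ‖ ≠ 0 := norm_ne_zero_iff.mpr hφ0
    have hφhat : ‖φ‖⁻¹ • φ ∈ D := by
      constructor
      · intro x hx
        simp only [ContinuousLinearMap.smul_apply, smul_eq_mul]
        exact mul_nonneg (inv_nonneg.mpr (norm_nonneg φ)) (hφpos x hx)
      · exact norm_inv_smul_mem_sphere hφ0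
    obtain ⟨ρ, hρt, hρ⟩ := by
      have := ht hφhat
      simpa only [mem_iUnion, exists_prop] using this
    have hpos : 0 < (‖φ‖⁻¹ • φ) (∑ ψ ∈ t, xv ψ) := by
      rw [map_sum]
      refine lt_of_lt_of_le hρ (Finset.single_le_sum (f := fun ψ => (‖φ‖⁻¹ • φ) (xv ψ)) ?_ hρt)
      intro ψ _
      exact hφhat.1 _ (hxvC ψ)
    have : φ (∑ ψ ∈ t, xv ψ) = ‖φ‖ * ((‖φ‖⁻¹ • φ) (∑ ψ ∈ t, xv ψ)) := by
      simp only [ContinuousLinearMap.smul_apply, smul_eq_mul, ← mul_assoc,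
        mul_inv_cancel₀ hφn, one_mul]
    rw [this]
    exact mul_pos (norm_pos_iff.mpr hφ0) hpos

/-- In finite dimensions, the convex hull of a compact set is compact. -/
lemma isCompact_convexHull_of_isCompact {E : Type*} [NormedAddCommGroup E] [NormedSpace ℝ E]
    [FiniteDimensional ℝ E] {s : Set E} (hs : IsCompact s) : IsCompact (convexHull ℝ s) := by
  rcases s.eq_empty_or_nonempty with rfl | ⟨p₀, hp₀⟩
  · simp
  set d := Module.finrank ℝ E + 1 with hd
  have key : convexHull ℝ s =
      (fun p : (Fin d → ℝ) × (Fin d → E) => ∑ i, p.1 i • p.2 i) ''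
        ((stdSimplex ℝ (Fin d)) ×ˢ (Set.univ.pi fun _ : Fin d => s)) := by
    apply Subset.antisymm
    · intro x hx
      obtain ⟨ι, hfin, z, w, hzs, hai, hwpos, hw1, hsum⟩ :=
        eq_pos_convex_span_of_mem_convexHull hx
      have hcard : Fintype.card ι ≤ d := by
        have h1 := hai.card_le_finrank_succ
        have h2 : Module.finrank ℝ (vectorSpan ℝ (Set.range z)) ≤ Module.finrank ℝ E :=
          Submodule.finrank_le _
        omega
      set m := d - Fintype.card ι with hm
      have hcardeq : Fintype.card (ι ⊕ Fin m) = d := by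
        simp only [Fintype.card_sum, Fintype.card_fin]
        omega
      obtain eqv := Fintype.equivFinOfCardEq hcardeq
      have hne : Nonempty ι := by
        by_contra hni
        rw [not_nonempty_iff] at hni
        rw [Finset.univ_eq_empty, Finset.sum_empty] at hw1
        norm_num at hw1
      obtain ⟨i0⟩ := hne
      set W : Fin d → ℝ := fun j => Sum.elim w (fun _ => 0) (eqv.symm j) with hW
      set Z : Fin d → E := fun j => Sum.elim z (fun _ => z i0) (eqv.symm j) with hZ
      refine ⟨⟨W, Z⟩, ⟨⟨?_, ?_⟩, ?_⟩, ?_⟩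
      · intro j
        rcases h : eqv.symm j with i | i <;> simp [hW, h, (hwpos _).le]
      · have : ∑ j, W j = ∑ p : ι ⊕ Fin m, Sum.elim w (fun _ => 0) p :=
          Equiv.sum_comp eqv.symm _
        rw [this, Fintype.sum_sum_type]
        simpa using hw1
      · intro j _
        rcases h : eqv.symm j with i | i <;> simp only [hZ, h, Sum.elim_inl, Sum.elim_inr] <;>
          exact hzs (Set.mem_range_self _)
      · show ∑ j, W j • Z j = x
        have : ∑ j, W j • Z j =
            ∑ p : ι ⊕ Fin m, Sum.elim w (fun _ => 0) p • Sum.elim z (fun _ => z i0) p :=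
          Equiv.sum_comp eqv.symm
            (fun p => Sum.elim w (fun _ => 0) p • Sum.elim z (fun _ => z i0) p)
        rw [this, Fintype.sum_sum_type]
        simpa using hsum
    · rintro x ⟨⟨W, Z⟩, ⟨⟨hW0, hW1⟩, hZ⟩, rfl⟩
      exact mem_convexHull_of_exists_fintype W Z hW0 hW1
        (fun i => hZ i (Set.mem_univ i)) rfl
  rw [key]
  apply IsCompact.image
  · exact (isCompact_stdSimplex ℝ (Fin d)).prod (isCompact_univ_pi fun _ => hs)
  · exact continuous_finset_sum _ fun i _ =>
      ((continuous_apply i).comp continuous_fst).smul ((continuous_apply i).comp continuous_snd)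

lemma trace_smulRight {V : Type*} [AddCommGroup V] [Module ℝ V] [FiniteDimensional ℝ V]
    (φ : Module.Dual ℝ V) (y : V) :
    LinearMap.trace ℝ V (LinearMap.smulRight φ y) = φ y := by
  have h : LinearMap.smulRight φ y = dualTensorHom ℝ V V (φ ⊗ₜ y) := by
    ext v; simp
  rw [h, LinearMap.trace_eq_contract_apply, contractLeft_apply]

/-- Every linear functional on the space of linear maps is of trace form. -/
lemma exists_trace_rep {V₁ V₂ : Type*} [NormedAddCommGroup V₁] [NormedSpace ℝ V₁]
    [FiniteDimensional ℝ V₁] [NormedAddCommGroup V₂] [NormedSpace ℝ V₂] [FiniteDimensional ℝ V₂]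
    (g : Module.Dual ℝ (V₁ →ₗ[ℝ] V₂)) :
    ∃ Q : V₂ →ₗ[ℝ] V₁, ∀ T : V₁ →ₗ[ℝ] V₂, LinearMap.trace ℝ V₁ (Q ∘ₗ T) = g T := by
  set τ : (V₂ →ₗ[ℝ] V₁) →ₗ[ℝ] Module.Dual ℝ (V₁ →ₗ[ℝ] V₂) :=
    { toFun := fun Q => (LinearMap.trace ℝ V₁) ∘ₗ (LinearMap.llcomp ℝ V₁ V₂ V₁ Q)
      map_add' := by
        intro Q Q'; ext T
        simp [LinearMap.add_comp]
      map_smul' := by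
        intro c Q; ext T
        simp [LinearMap.smul_comp] } with hτ
  have hinj : Function.Injective τ := by
    intro Q Q' hQQ
    ext x
    rw [← sub_eq_zero, ← LinearMap.sub_apply]
    rw [← Module.forall_dual_apply_eq_zero_iff ℝ]
    intro φ
    have h1 : (Q - Q') ∘ₗ LinearMap.smulRight φ x = LinearMap.smulRight φ ((Q - Q') x) := by
      ext v; simp
    have h2 : LinearMap.trace ℝ V₁ ((Q - Q') ∘ₗ LinearMap.smulRight φ x) = 0 := by
      have hq : τ Q (LinearMap.smulRight φ x) = τ Q' (LinearMap.smulRight φ x) := by rw [hQQ]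
      have hq' : LinearMap.trace ℝ V₁ (Q ∘ₗ LinearMap.smulRight φ x)
          = LinearMap.trace ℝ V₁ (Q' ∘ₗ LinearMap.smulRight φ x) := hq
      rw [LinearMap.sub_comp, map_sub, hq', sub_self]
    rw [h1, trace_smulRight] at h2
    exact h2
  have hsurj : Function.Surjective τ := by
    apply (LinearMap.injective_iff_surjective_of_finrank_eq_finrank ?_).mp hinj
    rw [Module.finrank_linearMap, Module.finrank_linearMap, Module.finrank_linearMap,
      Module.finrank_self, mul_one, mul_comm]
  obtain ⟨Q, hQ⟩ := hsurj g
  exact ⟨Q, fun T => by rw [← hQ]; rfl⟩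

section EbCone

variable {V₁ V₂ : Type*} [NormedAddCommGroup V₁] [NormedSpace ℝ V₁] [FiniteDimensional ℝ V₁]
  [NormedAddCommGroup V₂] [NormedSpace ℝ V₂] [FiniteDimensional ℝ V₂]

/-- Normalized rank-one positive maps. -/
def ebGen (C₁ : Set V₁) (C₂ : Set V₂) : Set (V₁ →L[ℝ] V₂) :=
  (fun p : (V₁ →L[ℝ] ℝ) × V₂ => p.1.smulRight p.2) ''
    (({φ : V₁ →L[ℝ] ℝ | ∀ x ∈ C₁, 0 ≤ φ x} ∩ Metric.sphere 0 1) ×ˢ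
      (C₂ ∩ Metric.sphere 0 1))

/-- The cone of entanglement breaking maps, as continuous linear maps. -/
def ebCone (C₁ : Set V₁) (C₂ : Set V₂) : Set (V₁ →L[ℝ] V₂) :=
  insert 0 {T | ∃ c : ℝ, 0 ≤ c ∧ ∃ z ∈ convexHull ℝ (ebGen C₁ C₂), T = c • z}

lemma ebGen_compact {C₁ : Set V₁} {C₂ : Set V₂} (h₁ : IsClosed C₁) (h₂ : IsClosed C₂) :
    IsCompact (ebGen C₁ C₂) := by
  apply IsCompact.image
  · apply IsCompact.prod
    · apply (isCompact_sphere 0 1).inter_left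
      have : {φ : V₁ →L[ℝ] ℝ | ∀ x ∈ C₁, 0 ≤ φ x}
          = ⋂ x ∈ C₁, {φ : V₁ →L[ℝ] ℝ | 0 ≤ φ x} := by ext φ; simp
      rw [this]
      exact isClosed_biInter fun x _ =>
        isClosed_Ici.preimage (ContinuousLinearMap.apply ℝ ℝ x).continuous
    · exact (isCompact_sphere 0 1).inter_left h₂
  · exact isBoundedBilinearMap_smulRight.continuous

lemma smul_mem_ebCone {C₁ : Set V₁} {C₂ : Set V₂} {T : V₁ →L[ℝ] V₂}
    (hT : T ∈ ebCone C₁ C₂) {t : ℝ} (ht : 0 ≤ t) : t • T ∈ ebCone C₁ C₂ := by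
  rcases hT with h0 | ⟨c, hc, z, hzm, rfl⟩
  · left; rw [h0]; simp
  · right; exact ⟨t * c, mul_nonneg ht hc, z, hzm, smul_smul t c z⟩

lemma smulRight_mem_ebCone {C₁ : Set V₁} {C₂ : Set V₂}
    (hsc₂ : ∀ ⦃c : ℝ⦄, 0 < c → ∀ ⦃x⦄, x ∈ C₂ → c • x ∈ C₂)
    {φ : V₁ →L[ℝ] ℝ} (hφ : ∀ x ∈ C₁, 0 ≤ φ x) {x : V₂} (hx : x ∈ C₂) :
    φ.smulRight x ∈ ebCone C₁ C₂ := by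
  rcases eq_or_ne φ 0 with rfl | hφ0
  · left; ext v; simp
  rcases eq_or_ne x 0 with rfl | hx0
  · left; ext v; simp
  right
  have hφn : ‖φ‖ ≠ 0 := norm_ne_zero_iff.mpr hφ0
  have hxn : ‖x‖ ≠ 0 := norm_ne_zero_iff.mpr hx0
  refine ⟨‖φ‖ * ‖x‖, by positivity, (‖φ‖⁻¹ • φ).smulRight (‖x‖⁻¹ • x), ?_, ?_⟩
  · apply subset_convexHull
    refine ⟨(‖φ‖⁻¹ • φ, ‖x‖⁻¹ • x), ⟨⟨?_, norm_inv_smul_mem_sphere hφ0⟩,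
      hsc₂ (by positivity) hx, norm_inv_smul_mem_sphere hx0⟩, rfl⟩
    intro y hy
    simp only [mem_setOf_eq, ContinuousLinearMap.smul_apply, smul_eq_mul]
    exact mul_nonneg (by positivity) (hφ y hy)
  · ext v
    simp only [ContinuousLinearMap.smulRight_apply, ContinuousLinearMap.smul_apply,
      smul_eq_mul]
    rw [smul_smul, smul_smul]
    congr 1
    field_simp

lemma ebCone_convex (C₁ : Set V₁) (C₂ : Set V₂) : Convex ℝ (ebCone C₁ C₂) := by
  rcases (ebGen C₁ C₂).eq_empty_or_nonempty with hK | hK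
  · have : ebCone C₁ C₂ = {0} := by
      apply Subset.antisymm
      · rintro T (h0 | ⟨c, _, z, hzm, _⟩)
        · exact h0
        · rw [hK] at hzm; simp at hzm
      · rintro T rfl; left; rfl
    rw [this]
    exact convex_singleton 0
  intro T₁ hT₁ T₂ hT₂ a b ha hb hab
  obtain ⟨z₀, hz₀⟩ : (convexHull ℝ (ebGen C₁ C₂)).Nonempty :=
    hK.mono (subset_convexHull ℝ _)
  have hrep : ∀ T ∈ ebCone C₁ C₂, ∃ c : ℝ, 0 ≤ c ∧ ∃ z ∈ convexHull ℝ (ebGen C₁ C₂),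
      T = c • z := by
    rintro T (h0 | ⟨c, hc, z, hzm, rfl⟩)
    · exact ⟨0, le_refl 0, z₀, hz₀, by rw [h0]; simp⟩
    · exact ⟨c, hc, z, hzm, rfl⟩
  obtain ⟨c₁, hc₁, z₁, hz₁, rfl⟩ := hrep T₁ hT₁
  obtain ⟨c₂, hc₂, z₂, hz₂, rfl⟩ := hrep T₂ hT₂
  set c := a * c₁ + b * c₂ with hc
  rcases eq_or_lt_of_le (show (0:ℝ) ≤ c by positivity) with hc0 | hc0
  · -- c = 0 forces both terms zero
    have h1 : a * c₁ = 0 ∧ b * c₂ = 0 := by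
      constructor <;> nlinarith [mul_nonneg ha hc₁, mul_nonneg hb hc₂]
    left
    rw [smul_smul, smul_smul, h1.1, h1.2]
    simp
  · right
    refine ⟨c, hc0.le, (a * c₁ / c) • z₁ + (b * c₂ / c) • z₂, ?_, ?_⟩
    · apply (convex_convexHull ℝ _) hz₁ hz₂ (by positivity) (by positivity)
      field_simp
      exact hc.symm
    · rw [smul_add, smul_smul, smul_smul, smul_smul, smul_smul]
      congr 1 <;> · congr 1; field_simp
lemma ebCone_mem_entanglementBreaking {C₁ : Set V₁} {C₂ : Set V₂} {T : V₁ →L[ℝ] V₂}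
    (hT : T ∈ ebCone C₁ C₂) : IsEntanglementBreaking C₁ C₂ (T : V₁ →ₗ[ℝ] V₂) := by
  rcases hT with h0 | ⟨c, hc, z, hzm, rfl⟩
  · refine ⟨0, Fin.elim0, Fin.elim0, fun i => i.elim0, fun i => i.elim0, fun v => ?_⟩
    rw [h0]; simp
  rw [mem_convexHull_iff_exists_fintype] at hzm
  obtain ⟨ι, hfin, w, k, hw0, hw1, hkK, hsum⟩ := hzm
  have hk : ∀ i, ∃ p : (V₁ →L[ℝ] ℝ) × V₂,
      ((∀ x ∈ C₁, 0 ≤ p.1 x) ∧ p.2 ∈ C₂) ∧ k i = p.1.smulRight p.2 := by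
    intro i
    obtain ⟨p, ⟨⟨hp1, _⟩, hp2, _⟩, hpk⟩ := hkK i
    exact ⟨p, ⟨hp1, hp2⟩, hpk.symm⟩
  choose p hp hkp using hk
  set m := Fintype.card ι with hm
  set eqv := (Fintype.equivFin ι).symm with heqv
  refine ⟨m, fun j => (c * w (eqv j)) • ((p (eqv j)).1 : V₁ →ₗ[ℝ] ℝ),
    fun j => (p (eqv j)).2, ?_, ?_, ?_⟩
  · intro j y hy
    simp only [LinearMap.smul_apply, ContinuousLinearMap.coe_coe, smul_eq_mul]
    exact mul_nonneg (mul_nonneg hc (hw0 _)) ((hp (eqv j)).1 y hy)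
  · exact fun j => (hp (eqv j)).2
  · intro v
    have h1 : (↑(c • z) : V₁ →ₗ[ℝ] V₂) v = c • z v := rfl
    have h2 : z v = ∑ i, w i • (k i) v := by
      rw [← hsum]; simp
    rw [h1, h2, Finset.smul_sum]
    refine Fintype.sum_equiv eqv.symm _ _ ?_
    intro i
    simp only [Equiv.apply_symm_apply, LinearMap.smul_apply, ContinuousLinearMap.coe_coe,
      smul_eq_mul, hkp i, ContinuousLinearMap.smulRight_apply, smul_smul]
    ring_nf

lemma ebCone_isClosed {C₁ : Set V₁} {C₂ : Set V₂}
    (h₁ : IsProperCone C₁) (h₂ : IsProperCone C₂) : IsClosed (ebCone C₁ C₂) := by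
  have hKcpt : IsCompact (ebGen C₁ C₂) := ebGen_compact h₁.1 h₂.1
  rcases (ebGen C₁ C₂).eq_empty_or_nonempty with hK | hK
  · have : ebCone C₁ C₂ = {0} := by
      apply Subset.antisymm
      · rintro T (h0 | ⟨c, _, z, hzm, _⟩)
        · exact h0
        · rw [hK] at hzm; simp at hzm
      · rintro T rfl; left; rfl
    rw [this]
    exact isClosed_singleton
  obtain ⟨e, heC, heu⟩ := exists_order_unit h₁
  obtain ⟨ψ, hψ0, hψp⟩ := exists_strict_pos_functional h₂
  set F : (V₁ →L[ℝ] V₂) → ℝ := fun T => ψ (T e) with hF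
  have hFcont : Continuous F := ψ.continuous.comp (ContinuousLinearMap.apply ℝ V₂ e).continuous
  have hFsmul : ∀ (c : ℝ) (T : V₁ →L[ℝ] V₂), F (c • T) = c * F T := by
    intro c T; simp [hF]
  have hFadd : ∀ T₁ T₂ : V₁ →L[ℝ] V₂, F (T₁ + T₂) = F T₁ + F T₂ := by
    intro T₁ T₂; simp [hF]
  have hFK : ∀ k ∈ ebGen C₁ C₂, 0 < F k := by
    rintro k ⟨⟨φ, x⟩, ⟨⟨hφpos, hφs⟩, hxC, hxs⟩, rfl⟩
    have hφ0 : φ ≠ 0 := by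
      intro h0; rw [h0] at hφs; simp at hφs
    have hx0 : x ≠ 0 := by
      intro h0; rw [h0] at hxs; simp at hxs
    have : F (φ.smulRight x) = φ e * ψ x := by
      simp [hF, map_smul]
    rw [this]
    exact mul_pos (heu φ hφpos hφ0) (hψp x hxC hx0)
  obtain ⟨k₀, hk₀K, hk₀min⟩ := hKcpt.exists_isMinOn hK hFcont.continuousOn
  set δ := F k₀ with hδdef
  have hδ : 0 < δ := hFK k₀ hk₀K
  have hhull : ∀ z ∈ convexHull ℝ (ebGen C₁ C₂), δ ≤ F z := by
    have hcvx : Convex ℝ {w : V₁ →L[ℝ] V₂ | δ ≤ F w} := by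
      intro a ha b hb s t hs ht hst
      have : F (s • a + t • b) = s * F a + t * F b := by
        rw [hFadd, hFsmul, hFsmul]
      simp only [mem_setOf_eq] at ha hb ⊢
      rw [this]
      nlinarith
    exact fun z hz => convexHull_min (fun k hk => hk₀min hk) hcvx hz
  have hHullCpt : IsCompact (convexHull ℝ (ebGen C₁ C₂)) :=
    isCompact_convexHull_of_isCompact hKcpt
  apply IsSeqClosed.isClosed
  intro u y hu huy
  obtain ⟨z₀, hz₀⟩ : (convexHull ℝ (ebGen C₁ C₂)).Nonempty :=
    hK.mono (subset_convexHull ℝ _)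
  have hrep : ∀ n, ∃ c : ℝ, 0 ≤ c ∧ ∃ z ∈ convexHull ℝ (ebGen C₁ C₂), u n = c • z := by
    intro n
    rcases hu n with h0 | ⟨c, hc, z, hz, hT⟩
    · exact ⟨0, le_refl 0, z₀, hz₀, by rw [h0]; simp⟩
    · exact ⟨c, hc, z, hz, hT⟩
  choose c hc z hz hcz using hrep
  have hFu : Filter.Tendsto (fun n => F (u n)) Filter.atTop (nhds (F y)) :=
    (hFcont.tendsto y).comp huy
  obtain ⟨M, hM⟩ := hFu.bddAbove_range
  have hcM : ∀ n, c n ≤ M / δ := by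
    intro n
    have h1 : δ ≤ F (z n) := hhull _ (hz n)
    have h2 : F (u n) ≤ M := hM (mem_range_self n)
    have h3 : F (u n) = c n * F (z n) := by rw [hcz n, hFsmul]
    rw [le_div_iff₀ hδ]
    nlinarith [hc n]
  have hcpt : IsCompact ((Icc (0:ℝ) (M / δ)) ×ˢ (convexHull ℝ (ebGen C₁ C₂))) :=
    isCompact_Icc.prod hHullCpt
  have hmem : ∀ n, ((c n, z n) : ℝ × (V₁ →L[ℝ] V₂)) ∈
      (Icc (0:ℝ) (M / δ)) ×ˢ (convexHull ℝ (ebGen C₁ C₂)) :=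
    fun n => ⟨⟨hc n, hcM n⟩, hz n⟩
  obtain ⟨⟨c₀, zz₀⟩, hlim_mem, g, hg, hgt⟩ := hcpt.tendsto_subseq hmem
  have h1 : Filter.Tendsto (fun n => c (g n) • z (g n)) Filter.atTop (nhds (c₀ • zz₀)) := by
    have hc' : Filter.Tendsto (fun n => c (g n)) Filter.atTop (nhds c₀) :=
      (continuous_fst.tendsto _).comp hgt
    have hz' : Filter.Tendsto (fun n => z (g n)) Filter.atTop (nhds zz₀) :=
      (continuous_snd.tendsto _).comp hgt
    exact hc'.smul hz'
  have h2 : Filter.Tendsto (fun n => u (g n)) Filter.atTop (nhds y) :=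
    huy.comp hg.tendsto_atTop
  have h2' : Filter.Tendsto (fun n => c (g n) • z (g n)) Filter.atTop (nhds y) := by
    have : (fun n => c (g n) • z (g n)) = fun n => u (g n) := by
      funext n; rw [← hcz (g n)]
    rw [this]; exact h2
  have hy : y = c₀ • zz₀ := tendsto_nhds_unique h2' h1
  exact Or.inr ⟨c₀, hlim_mem.1.1, zz₀, hlim_mem.2, hy⟩

end EbCone

/-- **Lemma (trace duality).** `P` is `(C₁,C₂)`-entanglement breaking iff
`Tr[Q ∘ P] ≥ 0` for every `(C₂,C₁)`-positive map `Q`. -/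
theorem entanglementBreaking_iff_trace_nonneg
    {V₁ V₂ : Type*} [NormedAddCommGroup V₁] [NormedSpace ℝ V₁] [FiniteDimensional ℝ V₁]
    [NormedAddCommGroup V₂] [NormedSpace ℝ V₂] [FiniteDimensional ℝ V₂]
    (C₁ : Set V₁) (C₂ : Set V₂) (h₁ : IsProperCone C₁) (h₂ : IsProperCone C₂)
    (P : V₁ →ₗ[ℝ] V₂) :
    IsEntanglementBreaking C₁ C₂ P ↔
      ∀ Q : V₂ →ₗ[ℝ] V₁, Set.MapsTo (⇑Q) C₂ C₁ →
        0 ≤ LinearMap.trace ℝ V₁ (Q ∘ₗ P) := by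
  constructor
  · rintro ⟨m, φ, x, hφ, hx, hP⟩ Q hQmaps
    have hcomp : Q ∘ₗ P = ∑ i, LinearMap.smulRight (φ i) (Q (x i)) := by
      ext v
      simp [hP v, map_sum, map_smul]
    rw [hcomp, map_sum]
    apply Finset.sum_nonneg
    intro i _
    rw [trace_smulRight]
    exact hφ i _ (hQmaps (hx i))
  · intro hQ
    set Pc := LinearMap.toContinuousLinearMap P with hPcdef
    have hPmem : Pc ∈ ebCone C₁ C₂ := by
      by_contra hPc'
      obtain ⟨f, u, hfP, hfC⟩ := geometric_hahn_banach_point_closed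
        (ebCone_convex C₁ C₂) (ebCone_isClosed h₁ h₂) hPc'
      have hu0 : u < 0 := by
        have := hfC 0 (mem_insert 0 _)
        simpa using this
      have hfpos : ∀ T ∈ ebCone C₁ C₂, 0 ≤ f T := by
        intro T hT
        by_contra hneg
        push_neg at hneg
        have ht : (0:ℝ) < 2 * u / f T := div_pos_of_neg_of_neg (by linarith) hneg
        have := hfC _ (smul_mem_ebCone hT ht.le)
        rw [map_smul] at this
        simp only [smul_eq_mul] at this
        rw [div_mul_cancel₀ _ (ne_of_lt hneg)] at this
        linarith
      set g : Module.Dual ℝ (V₁ →ₗ[ℝ] V₂) :=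
        f.toLinearMap ∘ₗ
          (LinearMap.toContinuousLinearMap : (V₁ →ₗ[ℝ] V₂) ≃ₗ[ℝ] (V₁ →L[ℝ] V₂)).toLinearMap
        with hgdef
      obtain ⟨Q, hQrep⟩ := exists_trace_rep g
      have hQpos : Set.MapsTo (⇑Q) C₂ C₁ := by
        intro x hx
        by_contra hQx
        obtain ⟨φ, hφpos, hφneg⟩ :=
          cone_separation h₁.1 h₁.2.1 h₁.2.2.1 (zero_mem_of_proper h₁) hQx
        have hTmem : LinearMap.toContinuousLinearMap
            (LinearMap.smulRight (φ : V₁ →ₗ[ℝ] ℝ) x) ∈ ebCone C₁ C₂ := by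
          have heq : LinearMap.toContinuousLinearMap
              (LinearMap.smulRight (φ : V₁ →ₗ[ℝ] ℝ) x) = φ.smulRight x := by
            ext v
            simp [LinearMap.coe_toContinuousLinearMap']
          rw [heq]
          exact smulRight_mem_ebCone h₂.2.2.1 hφpos hx
        have h1 : LinearMap.trace ℝ V₁ (Q ∘ₗ LinearMap.smulRight (φ : V₁ →ₗ[ℝ] ℝ) x)
            = φ (Q x) := by
          have heq2 : Q ∘ₗ LinearMap.smulRight (φ : V₁ →ₗ[ℝ] ℝ) x
              = LinearMap.smulRight (φ : V₁ →ₗ[ℝ] ℝ) (Q x) := by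
            ext v; simp
          rw [heq2, trace_smulRight]
          rfl
        have h2 := hQrep (LinearMap.smulRight (φ : V₁ →ₗ[ℝ] ℝ) x)
        have h3 : 0 ≤ g (LinearMap.smulRight (φ : V₁ →ₗ[ℝ] ℝ) x) := hfpos _ hTmem
        rw [← h2, h1] at h3
        linarith
      have htr := hQ Q hQpos
      have hgP : LinearMap.trace ℝ V₁ (Q ∘ₗ P) = f Pc := hQrep P
      rw [hgP] at htr
      linarith
    have hEB := ebCone_mem_entanglementBreaking hPmem
    rwa [show ((Pc : V₁ →L[ℝ] V₂) : V₁ →ₗ[ℝ] V₂) = P from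
      LinearMap.coe_toContinuousLinearMap P] at hEB

end
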